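/- arXiv:2308.06461 — 2 statements merged into one kernel-verified Lean document; each statement's English description precedes it below -/
import Mathlib

section
/- For every positive integer l, one has sqrt(2*pi*l) * (l/e)^l * exp(1/(12*l+1)) < l! < sqrt(2*pi*l) * (l/e)^l * exp(1/(12*l)). -/
open Real Filter Topology Stirling

private lemma robbins_three_pow (k : ℕ) : (2*(k:ℝ)+3) ≤ 3^(k+1) := by
  induction k with
  | zero => norm_num
  | succ j ih =>
    have h3 : (0:ℝ) < 3 ^ (j+1) := by positivity
    push_cast
    rw [pow_succ]
    push_cast at ih
    nlinarith

private lemma robbins_diff_lt (m : ℕ) :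
    Real.log (stirlingSeq (m+1)) - Real.log (stirlingSeq (m+2))
      < 1/(12*((m:ℝ)+1)) - 1/(12*((m:ℝ)+2)) := by
  have h := log_stirlingSeq_diff_hasSum m
  push_cast at h
  set n : ℝ := (m:ℝ)+1 with hn
  clear_value n
  have hn1 : (1:ℝ) ≤ n := by rw [hn]; have := Nat.cast_nonneg (α := ℝ) m; linarith
  set x : ℝ := (1/(2*n+1))^2 with hx
  clear_value x
  have h2n : (0:ℝ) < 2*n+1 := by linarith
  have hx0 : 0 < x := by rw [hx]; positivity
  have hx1 : x < 1 := by
    rw [hx]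
    apply pow_lt_one₀ (by positivity) _ (by norm_num)
    rw [div_lt_one (by linarith)]; linarith
  have hgeo : HasSum (fun k : ℕ => 1/3*x * x^k) (1/3*x * (1-x)⁻¹) :=
    (hasSum_geometric_of_lt_one hx0.le hx1).mul_left _
  have hlt : Real.log (stirlingSeq (m+1)) - Real.log (stirlingSeq (m+2))
      < 1/3*x * (1-x)⁻¹ := by
    rw [← h.tsum_eq, ← hgeo.tsum_eq]
    refine Summable.tsum_lt_tsum (i := 1) (fun k => ?_) ?_ h.summable hgeo.summable
    · have h13 : 1/(2*((k:ℝ)+1)+1) ≤ 1/3 := by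
        rw [div_le_div_iff₀ (by positivity) (by norm_num)]
        have : (0:ℝ) ≤ (k:ℝ) := Nat.cast_nonneg k
        linarith
      have hp : (0:ℝ) ≤ x * x^k := by positivity
      rw [pow_succ']
      nlinarith
    · push_cast
      norm_num
      nlinarith [pow_pos hx0 2]
  have hkey : 1/3*x * (1-x)⁻¹ = 1/(12*n) - 1/(12*(n+1)) := by
    rw [hx]
    have h4 : (0:ℝ) < 4*n^2+4*n := by nlinarith
    have e : (1:ℝ) - (1/(2*n+1))^2 = (4*n^2+4*n) / (2*n+1)^2 := by
      field_simp; ring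
    rw [e, inv_div]
    have hn0 : n ≠ 0 := by positivity
    have hn10 : n + 1 ≠ 0 := by positivity
    field_simp
    ring
  have : (m:ℝ)+2 = n+1 := by rw [hn]; ring
  rw [this]
  linarith

private lemma robbins_diff_gt (m : ℕ) :
    1/(12*((m:ℝ)+1)+1) - 1/(12*((m:ℝ)+2)+1)
      < Real.log (stirlingSeq (m+1)) - Real.log (stirlingSeq (m+2)) := by
  have h := log_stirlingSeq_diff_hasSum m
  push_cast at h
  set n : ℝ := (m:ℝ)+1 with hn
  clear_value n
  have hn1 : (1:ℝ) ≤ n := by rw [hn]; have := Nat.cast_nonneg (α := ℝ) m; linarith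
  set x : ℝ := (1/(2*n+1))^2 with hx
  clear_value x
  have h2n : (0:ℝ) < 2*n+1 := by linarith
  have hx0 : 0 < x := by rw [hx]; positivity
  have hx1 : x < 1 := by
    rw [hx]
    apply pow_lt_one₀ (by positivity) _ (by norm_num)
    rw [div_lt_one (by linarith)]; linarith
  have hx3 : x/3 < 1 := by linarith
  have hgeo : HasSum (fun k : ℕ => x/3 * (x/3)^k) (x/3 * (1-x/3)⁻¹) :=
    (hasSum_geometric_of_lt_one (by positivity) hx3).mul_left _
  have hlt : x/3 * (1-x/3)⁻¹
      < Real.log (stirlingSeq (m+1)) - Real.log (stirlingSeq (m+2)) := by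
    rw [← h.tsum_eq, ← hgeo.tsum_eq]
    refine Summable.tsum_lt_tsum (i := 1) (fun k => ?_) ?_ hgeo.summable h.summable
    · have hpow : (2*(k:ℝ)+3) ≤ 3^(k+1) := robbins_three_pow k
      have h3p : (0:ℝ) < 3^(k+1) := by positivity
      have h2k : (0:ℝ) < 2*(k:ℝ)+3 := by positivity
      have e1 : x/3 * (x/3)^k = x^(k+1) / 3^(k+1) := by
        rw [div_pow, pow_succ']
        ring
      have e2 : 1/(2*((k:ℝ)+1)+1) = 1/(2*(k:ℝ)+3) := by ring_nf
      rw [e1, e2]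
      have hstep : x^(k+1)/3^(k+1) ≤ x^(k+1)/(2*(k:ℝ)+3) := by
        gcongr
      calc x^(k+1)/3^(k+1) ≤ x^(k+1)/(2*(k:ℝ)+3) := hstep
        _ = 1/(2*(k:ℝ)+3) * x^(k+1) := by ring
    · push_cast
      norm_num
      nlinarith [pow_pos hx0 2]
  have hkey : 1/(12*n+1) - 1/(12*(n+1)+1) < x/3 * (1-x/3)⁻¹ := by
    have hval : x/3 * (1-x/3)⁻¹ = 1/(12*n^2+12*n+2) := by
      rw [hx]
      have h4 : (0:ℝ) < 12*n^2+12*n+2 := by nlinarith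
      have e : (1:ℝ) - ((1/(2*n+1))^2)/3 = (12*n^2+12*n+2) / (3*(2*n+1)^2) := by
        field_simp; ring
      rw [e, inv_div]
      field_simp
    rw [hval]
    rw [div_sub_div _ _ (by positivity) (by positivity),
      div_lt_div_iff₀ (by positivity) (by positivity)]
    nlinarith
  have : (m:ℝ)+2 = n+1 := by rw [hn]; ring
  rw [this]
  linarith

private lemma robbins_log_bounds (m : ℕ) :
    1/(12*((m:ℝ)+1)+1) < Real.log (stirlingSeq (m+1)) - Real.log (Real.sqrt π) ∧
    Real.log (stirlingSeq (m+1)) - Real.log (Real.sqrt π) < 1/(12*((m:ℝ)+1)) := by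
  set a : ℕ → ℝ := fun n => Real.log (stirlingSeq (n+1)) - 1/(12*((n:ℝ)+1)) with ha
  set b : ℕ → ℝ := fun n => Real.log (stirlingSeq (n+1)) - 1/(12*((n:ℝ)+1)+1) with hb
  have hmono : StrictMono a := strictMono_nat_of_lt_succ (fun n => by
    have := robbins_diff_lt n
    simp only [ha]
    push_cast
    push_cast at this
    ring_nf
    ring_nf at this
    linarith)
  have hanti : StrictAnti b := strictAnti_nat_of_succ_lt (fun n => by
    have := robbins_diff_gt n
    simp only [hb]
    push_cast
    push_cast at this
    ring_nf
    ring_nf at this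
    linarith)
  have hsqpi : (0:ℝ) < Real.sqrt π := Real.sqrt_pos.mpr Real.pi_pos
  have hlog : Tendsto (fun n : ℕ => Real.log (stirlingSeq (n+1))) atTop
      (𝓝 (Real.log (Real.sqrt π))) :=
    (tendsto_stirlingSeq_sqrt_pi.log hsqpi.ne').comp (tendsto_add_atTop_nat 1)
  have hzb : Tendsto (fun n : ℕ => 12*((n:ℝ)+1)) atTop atTop := by
    apply Filter.Tendsto.const_mul_atTop (by norm_num : (0:ℝ) < 12)
    exact tendsto_atTop_add_const_right _ 1 tendsto_natCast_atTop_atTop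
  have hz : Tendsto (fun n : ℕ => 1/(12*((n:ℝ)+1))) atTop (𝓝 0) := by
    simpa only [one_div, Pi.inv_def] using hzb.inv_tendsto_atTop
  have hz' : Tendsto (fun n : ℕ => 1/(12*((n:ℝ)+1)+1)) atTop (𝓝 0) := by
    simpa only [one_div, Pi.inv_def] using (tendsto_atTop_add_const_right _ 1 hzb).inv_tendsto_atTop
  have hta : Tendsto a atTop (𝓝 (Real.log (Real.sqrt π))) := by
    have h := hlog.sub hz
    rw [sub_zero] at h
    exact h
  have htb : Tendsto b atTop (𝓝 (Real.log (Real.sqrt π))) := by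
    have h := hlog.sub hz'
    rw [sub_zero] at h
    exact h
  constructor
  · have h1 : Real.log (Real.sqrt π) ≤ b (m+1) := hanti.antitone.le_of_tendsto htb (m+1)
    have h2 : b (m+1) < b m := hanti (Nat.lt_succ_self m)
    simp only [hb] at h1 h2
    push_cast at h1 h2
    linarith
  · have h1 : a (m+1) ≤ Real.log (Real.sqrt π) := hmono.monotone.ge_of_tendsto hta (m+1)
    have h2 : a m < a (m+1) := hmono (Nat.lt_succ_self m)
    simp only [ha] at h1 h2
    push_cast at h1 h2
    linarith

theorem robbins_stirling (l : ℕ) (hl : 0 < l) :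
    Real.sqrt (2 * π * l) * ((l : ℝ) / Real.exp 1) ^ l * Real.exp (1 / (12 * l + 1))
      < (Nat.factorial l : ℝ) ∧
    (Nat.factorial l : ℝ)
      < Real.sqrt (2 * π * l) * ((l : ℝ) / Real.exp 1) ^ l * Real.exp (1 / (12 * l)) := by
  obtain ⟨m, rfl⟩ : ∃ m, l = m + 1 := ⟨l-1, (Nat.succ_pred_eq_of_pos hl).symm⟩
  obtain ⟨hlow, hup⟩ := robbins_log_bounds m
  have hsqpi : (0:ℝ) < Real.sqrt π := Real.sqrt_pos.mpr Real.pi_pos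
  have hspos : (0:ℝ) < stirlingSeq (m+1) := stirlingSeq'_pos m
  set L : ℝ := (m:ℝ)+1 with hL
  have hL0 : (0:ℝ) < L := by positivity
  set D : ℝ := Real.sqrt (2*L) * (L/Real.exp 1)^(m+1) with hD
  have hD0 : (0:ℝ) < D := by
    rw [hD]
    have : (0:ℝ) < Real.exp 1 := Real.exp_pos 1
    positivity
  have hfac : ((m+1).factorial : ℝ) = stirlingSeq (m+1) * D := by
    rw [stirlingSeq, hD]
    push_cast
    rw [div_mul_cancel₀]
    positivity
  have hsq : Real.sqrt (2*π*L) = Real.sqrt π * Real.sqrt (2*L) := by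
    rw [show 2*π*L = π*(2*L) by ring, Real.sqrt_mul Real.pi_pos.le]
  have hsplus : Real.sqrt π * Real.exp (1/(12*L+1)) < stirlingSeq (m+1) := by
    have h1 : Real.log (Real.sqrt π) + 1/(12*L+1) < Real.log (stirlingSeq (m+1)) := by
      rw [hL]; linarith
    have h2 := Real.exp_lt_exp.mpr h1
    rwa [Real.exp_add, Real.exp_log hsqpi, Real.exp_log hspos] at h2
  have hsminus : stirlingSeq (m+1) < Real.sqrt π * Real.exp (1/(12*L)) := by
    have h1 : Real.log (stirlingSeq (m+1)) < Real.log (Real.sqrt π) + 1/(12*L) := by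
      rw [hL]; linarith
    have h2 := Real.exp_lt_exp.mpr h1
    rwa [Real.exp_add, Real.exp_log hsqpi, Real.exp_log hspos] at h2
  constructor
  · have hmul : Real.sqrt π * Real.exp (1/(12*L+1)) * D < stirlingSeq (m+1) * D :=
      mul_lt_mul_of_pos_right hsplus hD0
    calc Real.sqrt (2*π*↑(m+1)) * ((↑(m+1):ℝ)/Real.exp 1)^(m+1) * Real.exp (1/(12*↑(m+1)+1))
        = Real.sqrt π * Real.exp (1/(12*L+1)) * D := by
          push_cast
          rw [hD, ← hL, hsq]
          ring
      _ < stirlingSeq (m+1) * D := hmul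
      _ = ((m+1).factorial : ℝ) := hfac.symm
  · have hmul : stirlingSeq (m+1) * D < Real.sqrt π * Real.exp (1/(12*L)) * D :=
      mul_lt_mul_of_pos_right hsminus hD0
    calc ((m+1).factorial : ℝ) = stirlingSeq (m+1) * D := hfac
      _ < Real.sqrt π * Real.exp (1/(12*L)) * D := hmul
      _ = Real.sqrt (2*π*↑(m+1)) * ((↑(m+1):ℝ)/Real.exp 1)^(m+1) * Real.exp (1/(12*↑(m+1))) := by
          push_cast
          rw [hD, ← hL, hsq]
          ring
end

section
/- Let t and s be real numbers with 0 <= s*t < 1/6. Then |integral over R of exp(-y^2/2) * exp(i*(-t*y + s*y^3)) dy| <= sqrt(2*pi) * exp(-(t^2 - s*t^3)/2) * (1 - 6*s*t)^{-1/2}. -/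
open Real Complex MeasureTheory Set Filter

theorem cubic_phase_gaussian_integral_bound (t s : ℝ) (hst : 0 ≤ s * t) (hst' : s * t < 1/6) :
    ‖(∫ y : ℝ,
        Complex.exp (-((y : ℂ) ^ 2) / 2) *
          Complex.exp (Complex.I * (-(t : ℂ) * y + (s : ℂ) * (y : ℂ) ^ 3)))‖
      ≤ Real.sqrt (2 * π) * Real.exp (-(t ^ 2 - s * t ^ 3) / 2) *
          (1 - 6 * s * t) ^ (-(1 : ℝ) / 2) := by
  set b : ℝ := (1 - 6 * s * t) / 2 with hbdef
  have hbpos : 0 < b := by rw [hbdef]; linarith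
  set f : ℂ → ℂ := fun z => Complex.exp (-z^2/2 + I*(-(t:ℂ)*z + (s:ℂ)*z^3)) with hfdef
  have hfd : Differentiable ℂ f := by
    apply Complex.differentiable_exp.comp
    fun_prop
  have key : ∀ x y : ℝ, (-((x:ℂ)+y*I)^2/2 + I*(-(t:ℂ)*((x:ℂ)+y*I) + (s:ℂ)*((x:ℂ)+y*I)^3))
      = ((-(x^2-y^2)/2 + t*y - 3*s*x^2*y + s*y^3 : ℝ) : ℂ)
        + ((-x*y - t*x + s*x^3 - 3*s*x*y^2 : ℝ) : ℂ) * I := by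
    intro x y
    push_cast
    linear_combination ((s:ℂ)*y^3*I^2 - s*y^3 + 3*s*x*y^2*I - y^2/2 - t*y + 3*s*x^2*y) * Complex.I_sq
  have habs : ∀ x y : ℝ, ‖f ((x:ℂ) + y*I)‖
      = Real.exp (-(x^2-y^2)/2 + t*y - 3*s*x^2*y + s*y^3) := by
    intro x y
    rw [hfdef]
    simp only
    rw [Complex.norm_exp, key]
    simp only [Complex.add_re, Complex.ofReal_re, Complex.re_ofReal_mul, Complex.I_re,
      mul_zero, add_zero]
  have habs0 : ∀ x : ℝ, ‖f x‖ = Real.exp (-(1/2) * x^2) := by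
    intro x
    have := habs x 0
    simp only [Complex.ofReal_zero, zero_mul, add_zero] at this
    rw [this]
    congr 1
    ring
  have habs1 : ∀ x : ℝ, ‖f ((x:ℂ) + (-t:ℝ)*I)‖
      = Real.exp (-t^2/2 - s*t^3) * Real.exp (-b * x^2) := by
    intro x
    rw [habs x (-t), ← Real.exp_add]
    congr 1
    rw [hbdef]; ring
  -- integrability
  have hcont0 : Continuous fun x : ℝ => f x := hfd.continuous.comp Complex.continuous_ofReal
  have hcont1 : Continuous fun x : ℝ => f ((x:ℂ) + (-t:ℝ)*I) :=
    hfd.continuous.comp (by fun_prop)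
  have hint0 : Integrable fun x : ℝ => f x := by
    refine (integrable_exp_neg_mul_sq (by norm_num : (0:ℝ) < 1/2)).mono'
      hcont0.aestronglyMeasurable ?_
    filter_upwards with x
    rw [habs0]
  have hint1 : Integrable fun x : ℝ => f ((x:ℂ) + (-t:ℝ)*I) := by
    refine (((integrable_exp_neg_mul_sq hbpos).const_mul
      (Real.exp (-t^2/2 - s*t^3))).mono' hcont1.aestronglyMeasurable ?_)
    filter_upwards with x
    rw [habs1]
  -- bound on vertical segments
  have hsy : ∀ y ∈ Set.uIcc (0:ℝ) (-t), 0 ≤ s*y + s*t ∧ |y| ≤ |t| := by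
    intro y hy
    rw [Set.mem_uIcc] at hy
    constructor
    · rcases lt_trichotomy t 0 with ht | ht | ht
      · have hs : s ≤ 0 := by nlinarith
        rcases hy with ⟨h1, h2⟩ | ⟨h1, h2⟩
        · nlinarith
        · nlinarith
      · rcases hy with ⟨h1, h2⟩ | ⟨h1, h2⟩ <;>
          · have hy0 : y = 0 := by rw [ht] at *; linarith
            simp [hy0, ht]
      · have hs : 0 ≤ s := by nlinarith
        rcases hy with ⟨h1, h2⟩ | ⟨h1, h2⟩
        · nlinarith
        · nlinarith
    · rcases hy with ⟨h1, h2⟩ | ⟨h1, h2⟩ <;>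
        rw [abs_le] <;>
        constructor <;>
        linarith [le_abs_self t, neg_abs_le t, abs_nonneg t]
  have hvertbound : ∀ T x y : ℝ, x^2 = T^2 → y ∈ Set.uIcc (0:ℝ) (-t) →
      ‖f ((x:ℂ) + y*I)‖ ≤ Real.exp (t^2/2 + t^2 + |s| * |t|^3) * Real.exp (-b * T^2) := by
    intro T x y hx2 hy
    obtain ⟨h1, h2⟩ := hsy y hy
    rw [habs, ← Real.exp_add, Real.exp_le_exp]
    have e1 : y^2 ≤ t^2 := by nlinarith [abs_nonneg y, abs_nonneg t, _root_.sq_abs y, _root_.sq_abs t]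
    have e2 : t*y ≤ t^2 := by
      have h3 := le_abs_self (t * y)
      have h4 : |t * y| = |t| * |y| := abs_mul t y
      nlinarith [abs_nonneg t, _root_.sq_abs t]
    have e3 : s*y^3 ≤ |s| * |t|^3 := by
      have h4 : s * y ^ 3 ≤ |s * y ^ 3| := le_abs_self _
      have h5 : |s * y ^ 3| = |s| * |y| ^ 3 := by simp [abs_mul, _root_.abs_pow]
      have h6 : |y|^3 ≤ |t|^3 := pow_le_pow_left₀ (abs_nonneg y) h2 3
      nlinarith [abs_nonneg s]
    have e4 : 0 ≤ 3*(s*y + s*t)*x^2 := by positivity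
    have hb' : b = (1 - 6*s*t)/2 := hbdef
    nlinarith [e1, e2, e3, e4]
  -- contour shift
  have hshift : (∫ x : ℝ, f ((x:ℂ) + (-t:ℝ)*I)) = ∫ x : ℝ, f x := by
    refine tendsto_nhds_unique
      (intervalIntegral_tendsto_integral hint1 tendsto_neg_atTop_atBot tendsto_id) ?_
    have C : ∀ T : ℝ, (∫ x : ℝ in -T..T, f ((x:ℂ) + (-t:ℝ)*I))
        = (∫ x : ℝ in -T..T, f x)
          + (I * (∫ y : ℝ in (0:ℝ)..(-t), f ((T:ℂ) + y*I))
             - I * (∫ y : ℝ in (0:ℝ)..(-t), f ((-T:ℂ) + y*I))) := by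
      intro T
      have h := integral_boundary_rect_eq_zero_of_differentiableOn f (-(T:ℂ))
        ((T:ℂ) + (-t:ℝ)*I) hfd.differentiableOn
      simp only [neg_im, ofReal_im, neg_zero, ofReal_zero, zero_mul, add_zero, neg_re,
        ofReal_re, add_re, mul_re, I_re, mul_zero, I_im, sub_zero, tsub_zero, add_im, mul_im,
        mul_one, zero_add, smul_eq_mul, ofReal_neg, Complex.ofReal_zero] at h
      push_cast at h ⊢
      linear_combination -h
    have hv : Tendsto (fun T : ℝ =>
        I * (∫ y : ℝ in (0:ℝ)..(-t), f ((T:ℂ) + y*I))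
          - I * (∫ y : ℝ in (0:ℝ)..(-t), f ((-T:ℂ) + y*I))) atTop (nhds 0) := by
      have hg : Tendsto (fun T : ℝ =>
          2 * (Real.exp (t^2/2 + t^2 + |s| * |t|^3) * Real.exp (-b * T^2) * |(-t) - 0|))
          atTop (nhds 0) := by
        have h2 : Tendsto (fun T : ℝ => Real.exp (-b * T^2)) atTop (nhds 0) := by
          have h0 : Tendsto (fun T : ℝ => b * T^2) atTop atTop :=
            Tendsto.const_mul_atTop hbpos (tendsto_pow_atTop two_ne_zero)
          have h1 : Tendsto (fun T : ℝ => -b * T^2) atTop atBot := by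
            simp only [neg_mul]
            exact tendsto_neg_atTop_atBot.comp h0
          exact Real.tendsto_exp_atBot.comp h1
        simpa using (((h2.const_mul
          (Real.exp (t^2/2 + t^2 + |s| * |t|^3))).mul_const (|(-t) - 0|)).const_mul 2)
      refine squeeze_zero_norm (fun T => ?_) hg
      have hb1 : ‖∫ y : ℝ in (0:ℝ)..(-t), f ((T:ℂ) + y*I)‖
          ≤ Real.exp (t^2/2 + t^2 + |s| * |t|^3) * Real.exp (-b * T^2) * |(-t) - 0| := by
        apply intervalIntegral.norm_integral_le_of_norm_le_const
        intro y hy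
        exact hvertbound T T y rfl (Set.uIoc_subset_uIcc hy)
      have hb2 : ‖∫ y : ℝ in (0:ℝ)..(-t), f ((-T:ℂ) + y*I)‖
          ≤ Real.exp (t^2/2 + t^2 + |s| * |t|^3) * Real.exp (-b * T^2) * |(-t) - 0| := by
        apply intervalIntegral.norm_integral_le_of_norm_le_const
        intro y hy
        have := hvertbound T (-T) y (by ring) (Set.uIoc_subset_uIcc hy)
        simpa using this
      calc ‖I * (∫ y : ℝ in (0:ℝ)..(-t), f ((T:ℂ) + y*I))
            - I * (∫ y : ℝ in (0:ℝ)..(-t), f ((-T:ℂ) + y*I))‖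
          ≤ ‖I * (∫ y : ℝ in (0:ℝ)..(-t), f ((T:ℂ) + y*I))‖
            + ‖I * (∫ y : ℝ in (0:ℝ)..(-t), f ((-T:ℂ) + y*I))‖ := norm_sub_le _ _
        _ ≤ 2 * (Real.exp (t^2/2 + t^2 + |s| * |t|^3) * Real.exp (-b * T^2) * |(-t) - 0|) := by
            rw [norm_mul, norm_mul, Complex.norm_I, one_mul, one_mul]
            linarith
    have hmain := (intervalIntegral_tendsto_integral hint0 tendsto_neg_atTop_atBot tendsto_id).add hv
    rw [add_zero] at hmain
    exact hmain.congr (fun T => (C T).symm)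
  -- final estimate
  have hrw : (∫ y : ℝ, Complex.exp (-((y : ℂ) ^ 2) / 2) *
      Complex.exp (Complex.I * (-(t : ℂ) * y + (s : ℂ) * (y : ℂ) ^ 3))) = ∫ x : ℝ, f x := by
    congr 1
    funext y
    rw [hfdef]
    simp only
    rw [← Complex.exp_add]
  have h1p : (0:ℝ) < 1 - 6*s*t := by linarith
  have hsq : Real.sqrt (π / b) = Real.sqrt (2*π) * (1 - 6*s*t) ^ (-(1:ℝ)/2) := by
    have h2 : π / b = 2*π / (1 - 6*s*t) := by
      rw [hbdef]
      field_simp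
    rw [h2, Real.sqrt_div (by positivity) _]
    rw [show (-(1:ℝ)/2) = -(1/2 : ℝ) by norm_num, Real.rpow_neg h1p.le, ← Real.sqrt_eq_rpow,
      div_eq_mul_inv]
  have hexple : Real.exp (-t^2/2 - s*t^3) ≤ Real.exp (-(t^2 - s*t^3)/2) := by
    rw [Real.exp_le_exp]
    nlinarith [sq_nonneg t, mul_nonneg hst (sq_nonneg t)]
  calc ‖(∫ y : ℝ, Complex.exp (-((y : ℂ) ^ 2) / 2) *
          Complex.exp (Complex.I * (-(t : ℂ) * y + (s : ℂ) * (y : ℂ) ^ 3)))‖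
      = ‖∫ x : ℝ, f ((x:ℂ) + (-t:ℝ)*I)‖ := by rw [hrw, hshift]
    _ ≤ ∫ x : ℝ, ‖f ((x:ℂ) + (-t:ℝ)*I)‖ := by
        exact norm_integral_le_integral_norm _
    _ = Real.exp (-t^2/2 - s*t^3) * Real.sqrt (π / b) := by
        rw [← integral_gaussian b, ← integral_const_mul]
        congr 1
        funext x
        rw [habs1]
    _ ≤ Real.exp (-(t^2 - s*t^3)/2) * (Real.sqrt (2*π) * (1 - 6*s*t) ^ (-(1:ℝ)/2)) := by
        rw [hsq]
        exact mul_le_mul_of_nonneg_right hexple (by positivity)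
    _ = Real.sqrt (2 * π) * Real.exp (-(t ^ 2 - s * t ^ 3) / 2) *
          (1 - 6 * s * t) ^ (-(1 : ℝ) / 2) := by ring
end
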